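/- Let θ_1 ≤ θ_2 ≤ … ≤ θ_N be real numbers with θ_N − θ_1 < π, and let i_0, i_1, …, i_p ∈ {1,…,N} be any finite sequence of indices with i_0 = 1 and i_p = N. Then Σ_{k=1}^p sin(θ_{min{i_{k−1}, i_k}} − θ_{max{i_{k−1}, i_k}}) ≤ −sin(θ_N − θ_1). -/
import Mathlib


open Real Finset

/-- Diameter: max minus min of a finite family of reals. -/
noncomputable def diam {N : ℕ} (v : Fin N → ℝ) : ℝ := (⨆ i, v i) - (⨅ i, v i)

/-- `S_c = Σ_{n=0}^{N-1} c^n`. -/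
noncomputable def Sc (N : ℕ) (c : ℝ) : ℝ := ∑ n ∈ Finset.range N, c ^ n

/-- `Y_c(z)`: difference of the two convex-type combinations of the nondecreasing
rearrangement of `z` (weights `c^{i-1}` and `c^{N-i}`), divided by `S_c`. -/
noncomputable def Yc {N : ℕ} (c : ℝ) (z : Fin N → ℝ) : ℝ :=
  (∑ i : Fin N, c ^ (i : ℕ) * z (Tuple.sort z i) -
   ∑ i : Fin N, c ^ (N - 1 - (i : ℕ)) * z (Tuple.sort z i)) / Sc N c

/-- Concavity of sin on `[0, π]` gives `sin D * d ≤ sin d * D` for `0 ≤ d ≤ D ≤ π`. -/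
lemma sin_mul_aux {d D : ℝ} (hd0 : 0 ≤ d) (hdD : d ≤ D) (hDpi : D ≤ π) :
    Real.sin D * d ≤ Real.sin d * D := by
  rcases eq_or_lt_of_le (hd0.trans hdD) with hD | hD
  · have : d = 0 := le_antisymm (hdD.trans hD.symm.le) hd0
    simp [this, ← hD]
  · set t := d / D with ht
    have ht0 : 0 ≤ t := div_nonneg hd0 hD.le
    have ht1 : t ≤ 1 := (div_le_one hD).2 hdD
    have hconc := strictConcaveOn_sin_Icc.concaveOn.2
      (Set.mem_Icc.2 ⟨le_refl (0:ℝ), Real.pi_pos.le⟩)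
      (Set.mem_Icc.2 ⟨hD.le.trans (le_refl D) |>.trans (le_refl D) |>.trans_eq rfl |>.trans (le_refl D) , hDpi⟩)
      (by linarith : (0:ℝ) ≤ 1 - t) ht0 (by ring)
    simp only [smul_eq_mul, mul_zero, Real.sin_zero, add_zero, zero_add] at hconc
    have htd : t * D = d := div_mul_cancel₀ d hD.ne'
    rw [htd] at hconc
    -- hconc : (1-t) * sin 0 + t * sin D ≤ sin d, roughly
    have h2 : t * Real.sin D ≤ Real.sin d := by linarith [hconc]
    have := mul_le_mul_of_nonneg_right h2 hD.le
    calc Real.sin D * d = t * Real.sin D * D := by rw [← htd]; ring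
      _ ≤ Real.sin d * D := this


/-- path estimate for ordered phases in a half circle. -/
theorem stmt5 {N : ℕ} (hN : 2 ≤ N) (θ : Fin N → ℝ) (hmono : Monotone θ)
    (hdiam : θ ⟨N - 1, by omega⟩ - θ ⟨0, by omega⟩ < π)
    (p : ℕ) (idx : ℕ → Fin N)
    (hfirst : idx 0 = ⟨0, by omega⟩) (hlast : idx p = ⟨N - 1, by omega⟩) :
    ∑ k ∈ Finset.range p,
        Real.sin (θ (min (idx k) (idx (k + 1))) - θ (max (idx k) (idx (k + 1))))
      ≤ - Real.sin (θ ⟨N - 1, by omega⟩ - θ ⟨0, by omega⟩) := by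
  have hN1 : N - 1 < N := by omega
  have h0N : 0 < N := by omega
  have hle_w : ∀ i : Fin N, i ≤ (⟨N - 1, hN1⟩ : Fin N) := fun i => by
    have := i.isLt; simp only [Fin.le_def, Fin.val_mk]; omega
  have hz_le : ∀ i : Fin N, (⟨0, h0N⟩ : Fin N) ≤ i := fun i => by
    simp only [Fin.le_def, Fin.val_mk]; exact Nat.zero_le _
  set D : ℝ := θ ⟨N - 1, hN1⟩ - θ ⟨0, h0N⟩ with hDdef
  have hDpi : D < π := hdiam
  have hD0 : 0 ≤ D := sub_nonneg.2 (hmono (hz_le _))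
  set d : ℕ → ℝ := fun k => θ (max (idx k) (idx (k + 1))) - θ (min (idx k) (idx (k + 1)))
    with hd
  have hdk0 : ∀ k, 0 ≤ d k := fun k => sub_nonneg.2 (hmono min_le_max)
  have hdkD : ∀ k, d k ≤ D := fun k =>
    sub_le_sub (hmono (hle_w _)) (hmono (hz_le _))
  have hsin : ∀ k, Real.sin (θ (min (idx k) (idx (k + 1))) - θ (max (idx k) (idx (k + 1))))
      = - Real.sin (d k) := by
    intro k; rw [hd]; rw [← Real.sin_neg]; ring_nf
  have hstep : ∀ k, θ (idx (k + 1)) - θ (idx k) ≤ d k := by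
    intro k
    rcases le_total (idx k) (idx (k + 1)) with h | h
    · rw [hd]; simp [min_eq_left h, max_eq_right h]
    · have h1 := hmono h
      have h2 := hdk0 k
      linarith
  have hsum : D ≤ ∑ k ∈ Finset.range p, d k := by
    have htel : ∑ k ∈ Finset.range p, (θ (idx (k + 1)) - θ (idx k)) = D := by
      rw [Finset.sum_range_sub (fun k => θ (idx k)), hfirst, hlast]
    calc D = ∑ k ∈ Finset.range p, (θ (idx (k + 1)) - θ (idx k)) := htel.symm
      _ ≤ ∑ k ∈ Finset.range p, d k := Finset.sum_le_sum fun k _ => hstep k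
  have key : Real.sin D ≤ ∑ k ∈ Finset.range p, Real.sin (d k) := by
    rcases eq_or_lt_of_le hD0 with hDz | hDz
    · have hdz : ∀ k ∈ Finset.range p, Real.sin (d k) = 0 := by
        intro k _
        have : d k = 0 := le_antisymm ((hdkD k).trans_eq hDz.symm) (hdk0 k)
        simp [this]
      rw [Finset.sum_congr rfl hdz]
      simp [← hDz]
    · have hsinD0 : 0 ≤ Real.sin D :=
        Real.sin_nonneg_of_nonneg_of_le_pi hD0 hDpi.le
      have h1 : Real.sin D * D ≤ Real.sin D * ∑ k ∈ Finset.range p, d k :=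
        mul_le_mul_of_nonneg_left hsum hsinD0
      have h2 : Real.sin D * ∑ k ∈ Finset.range p, d k
          ≤ (∑ k ∈ Finset.range p, Real.sin (d k)) * D := by
        rw [Finset.mul_sum, Finset.sum_mul]
        exact Finset.sum_le_sum fun k _ => sin_mul_aux (hdk0 k) (hdkD k) hDpi.le
      have h3 := h1.trans h2
      exact le_of_mul_le_mul_right (by linarith) hDz
  calc ∑ k ∈ Finset.range p,
        Real.sin (θ (min (idx k) (idx (k + 1))) - θ (max (idx k) (idx (k + 1))))
      = ∑ k ∈ Finset.range p, - Real.sin (d k) := Finset.sum_congr rfl fun k _ => hsin k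
    _ = - ∑ k ∈ Finset.range p, Real.sin (d k) := by rw [Finset.sum_neg_distrib]
    _ ≤ - Real.sin D := neg_le_neg key
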